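/- arXiv:2510.03672 — 3 statements merged into one kernel-verified Lean document; each statement's English description precedes it below -/
import Mathlib

section
/- For every integer n ≥ 2, log V(n) ≤ (3/8) · τ(n)² · log n, where V(n) = ∏_{1 ≤ i < j ≤ τ(n)} (d_j − d_i) and 1 = d_1 < d_2 < ⋯ < d_{τ(n)} = n are the positive divisors of n in increasing order. -/
open Finset
open scoped Classical

noncomputable section

/-- Number of positive divisors of `n`. -/
def tau (n : ℕ) : ℕ := n.divisors.card

/-- The positive divisors of `n` in increasing order. -/
def sortedDivisors (n : ℕ) : List ℕ := n.divisors.sort (· ≤ ·)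

/-- The `i`-th divisor of `n` (1-based): `dvs n 1 = 1`, ..., `dvs n (tau n) = n`. -/
def dvs (n i : ℕ) : ℕ := (sortedDivisors n).getD (i - 1) 0

/-- `S(n) = ∑_{i=1}^{τ(n)} (i-1) log d_i`. -/
noncomputable def Sfun (n : ℕ) : ℝ :=
  ∑ i ∈ Finset.Icc 1 (tau n), ((i : ℝ) - 1) * Real.log (dvs n i)

/-- `V(n) = ∏_{1 ≤ i < j ≤ τ(n)} (d_j - d_i)`. -/
noncomputable def Vfun (n : ℕ) : ℝ :=
  ∏ j ∈ Finset.Icc 1 (tau n), ∏ i ∈ Finset.Ico 1 j, ((dvs n j : ℝ) - (dvs n i : ℝ))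

/-- `Ω₂(n) = ∑_{p^α ∥ n} α²`. -/
def Omega2 (n : ℕ) : ℕ := ∑ p ∈ n.primeFactors, (n.factorization p) ^ 2


lemma length_sd (n : ℕ) : (sortedDivisors n).length = tau n :=
  Finset.length_sort _

lemma mem_sd {n x : ℕ} : x ∈ sortedDivisors n ↔ x ∈ n.divisors := by
  rw [sortedDivisors]; exact Finset.mem_sort _

lemma sorted_sd (n : ℕ) : (sortedDivisors n).Pairwise (· ≤ ·) := Finset.pairwise_sort _ _

lemma dvs_mem (n : ℕ) {i : ℕ} (h1 : 1 ≤ i) (h2 : i ≤ tau n) : dvs n i ∈ n.divisors := by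
  have hlt : i - 1 < (sortedDivisors n).length := by rw [length_sd]; omega
  rw [dvs, List.getD_eq_getElem _ _ hlt]
  exact mem_sd.mp (List.getElem_mem hlt)

lemma dvs_lt (n : ℕ) {i j : ℕ} (h1 : 1 ≤ i) (hij : i < j) (h2 : j ≤ tau n) :
    dvs n i < dvs n j := by
  have hlt : j - 1 < (sortedDivisors n).length := by rw [length_sd]; omega
  have hlt' : i - 1 < (sortedDivisors n).length := by omega
  rw [dvs, dvs, List.getD_eq_getElem _ _ hlt, List.getD_eq_getElem _ _ hlt']
  have hs : (sortedDivisors n).Pairwise (· < ·) := (Finset.sortedLT_sort n.divisors).pairwise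
  exact List.Pairwise.rel_get_of_lt hs (a := ⟨i-1, hlt'⟩) (b := ⟨j-1, hlt⟩) (by simp; omega)

lemma sd_reverse (n : ℕ) (hn : n ≠ 0) :
    (sortedDivisors n).reverse = (sortedDivisors n).map (n / ·) := by
  have hnd : (sortedDivisors n).Nodup := Finset.sort_nodup _ _
  have hinj : ∀ x ∈ sortedDivisors n, ∀ y ∈ sortedDivisors n, n / x = n / y → x = y := by
    intro x hx y hy hxy
    rw [mem_sd, Nat.mem_divisors] at hx hy
    have hx' := Nat.div_div_self hx.1 hn
    have hy' := Nat.div_div_self hy.1 hn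
    rw [← hx', ← hy', hxy]
  have hnd2 : ((sortedDivisors n).map (n / ·)).Nodup := List.Nodup.map_on hinj hnd
  have key : ((sortedDivisors n).map (n / ·)).reverse = sortedDivisors n := by
    refine (fun hp h1 h2 => List.Perm.eq_of_pairwise' (r := ((· ≤ ·) : ℕ → ℕ → Prop)) h1 h2 hp) ?_ ?_ ?_
    · apply List.perm_of_nodup_nodup_toFinset_eq (List.nodup_reverse.mpr hnd2) hnd
      have h2 : ((sortedDivisors n).map (n / ·)).toFinset = n.divisors := by
        ext x
        simp only [List.mem_toFinset, List.mem_map]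
        constructor
        · rintro ⟨a, ha, rfl⟩
          rw [← Nat.image_div_divisors_eq_divisors n]
          exact Finset.mem_image_of_mem _ (mem_sd.mp ha)
        · intro hx
          rw [← Nat.image_div_divisors_eq_divisors n] at hx
          obtain ⟨a, ha, rfl⟩ := Finset.mem_image.mp hx
          exact ⟨a, mem_sd.mpr ha, rfl⟩
      rw [List.toFinset_reverse, h2, sortedDivisors, Finset.sort_toFinset]
    · rw [List.pairwise_reverse, List.pairwise_map]
      apply List.Pairwise.imp_of_mem (R := (· ≤ ·))
      · intro a b ha hb hab
        exact Nat.div_le_div_left hab (Nat.pos_of_mem_divisors (mem_sd.mp ha))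
      · exact sorted_sd n
    · exact sorted_sd n
  have := congrArg List.reverse key
  rw [List.reverse_reverse] at this
  exact this.symm

lemma dvs_reflect (n : ℕ) (hn : n ≠ 0) {i : ℕ} (h1 : 1 ≤ i) (h2 : i ≤ tau n) :
    dvs n i * dvs n (tau n + 1 - i) = n := by
  have hlen := length_sd n
  have hlt : i - 1 < (sortedDivisors n).length := by omega
  have hlt2 : tau n - i < (sortedDivisors n).length := by omega
  have h3 : dvs n (tau n + 1 - i) = n / dvs n i := by
    have e1 : tau n + 1 - i - 1 = tau n - i := by omega
    have hltr : i - 1 < (sortedDivisors n).reverse.length := by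
      rw [List.length_reverse]; omega
    have e2 : (sortedDivisors n).getD (tau n - i) 0
        = (sortedDivisors n).reverse.getD (i - 1) 0 := by
      rw [List.getD_eq_getElem _ _ hlt2, List.getD_eq_getElem _ _ hltr,
        List.getElem_reverse]
      congr 1
      omega
    have e3 : ((sortedDivisors n).map (n / ·)).getD (i - 1) 0
        = n / (sortedDivisors n).getD (i - 1) 0 := by
      have : (0 : ℕ) = n / 0 := by simp
      rw [this, List.getD_map, ← this]
    rw [dvs, e1, e2, sd_reverse n hn, e3, dvs]
  rw [h3]
  have hd : dvs n i ∣ n := (Nat.mem_divisors.mp (dvs_mem n h1 h2)).1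
  exact Nat.mul_div_cancel' hd

lemma g_eq : ∀ τ : ℕ, ∑ i ∈ Finset.range τ, (2*i+1 - τ) = (τ/2) * ((τ+1)/2) := by
  intro τ
  induction τ using Nat.strong_induction_on with
  | _ τ ih =>
    match τ with
    | 0 => simp
    | 1 => simp
    | (τ+2) =>
      rw [Finset.sum_range_succ']
      have e1 : ∀ i ∈ Finset.range (τ+1), 2*(i+1)+1 - (τ+2) = 2*i+1 - τ := by
        intro i _; omega
      rw [Finset.sum_congr rfl e1, Finset.sum_range_succ, ih τ (by omega)]
      have e2 : 2*τ+1 - τ = τ + 1 := by omega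
      have e3 : (τ+2)/2 = τ/2 + 1 := by omega
      have e4 : (τ+2+1)/2 = (τ+1)/2 + 1 := by omega
      have e5 : τ/2 + (τ+1)/2 = τ := by omega
      have e6 : (τ/2 + 1) * ((τ+1)/2 + 1) = (τ/2) * ((τ+1)/2) + (τ/2 + (τ+1)/2) + 1 := by
        ring
      rw [e2, e3, e4, e6, e5]
      omega

lemma gauss2 (t : ℕ) : (∑ i ∈ Finset.range t, i) * 2 + t = t * t := by
  induction t with
  | zero => simp
  | succ t ih => rw [Finset.sum_range_succ]; nlinarith [ih]

lemma nat_bound (τ : ℕ) :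
    4 * (∑ i ∈ Finset.Icc 1 τ, ((τ - i) + (2*i - 1 - τ))) ≤ 3 * τ^2 := by
  have h0 : Finset.Icc 1 τ = Finset.Ico 1 (τ+1) := by rw [Finset.Ico_add_one_right_eq_Icc]
  rw [h0, Finset.sum_Ico_eq_sum_range]
  rw [Nat.add_sub_cancel]
  have e1 : ∀ k ∈ Finset.range τ, (τ - (1+k)) + (2*(1+k) - 1 - τ)
      = (τ - 1 - k) + (2*k+1 - τ) := by intro k _; omega
  rw [Finset.sum_congr rfl e1, Finset.sum_add_distrib]
  rw [Finset.sum_range_reflect (fun k => k) τ, g_eq]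
  have hA := gauss2 τ
  set A := ∑ k ∈ Finset.range τ, k with hA'
  obtain ⟨m, hm | hm⟩ := Nat.even_or_odd' τ
  · subst hm
    have h2 : (2*m)/2 = m := by omega
    have h3 : (2*m+1)/2 = m := by omega
    rw [h2, h3]
    nlinarith [hA]
  · subst hm
    have h2 : (2*m+1)/2 = m := by omega
    have h3 : (2*m+1+1)/2 = m+1 := by omega
    rw [h2, h3]
    nlinarith [hA]

theorem log_V_upper (n : ℕ) (hn : 2 ≤ n) :
    Real.log (Vfun n) ≤ 3 / 8 * (tau n : ℝ) ^ 2 * Real.log n := by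
  have hn0 : n ≠ 0 := by omega
  set τ := tau n with hτdef
  have hL0 : (0:ℝ) ≤ Real.log n := Real.log_nonneg (by
    have h1 : (1:ℕ) ≤ n := by omega
    exact_mod_cast h1)
  -- basic divisor facts
  have hd1 : ∀ i, 1 ≤ i → i ≤ τ → 1 ≤ dvs n i := fun i h1 h2 =>
    Nat.pos_of_mem_divisors (dvs_mem n h1 h2)
  have hdn : ∀ i, 1 ≤ i → i ≤ τ → dvs n i ≤ n := fun i h1 h2 =>
    Nat.divisor_le (dvs_mem n h1 h2)
  have hf0 : ∀ i, 1 ≤ i → i ≤ τ → 0 ≤ Real.log (dvs n i) := fun i h1 h2 =>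
    Real.log_nonneg (by exact_mod_cast hd1 i h1 h2)
  have hfL : ∀ i, 1 ≤ i → i ≤ τ → Real.log (dvs n i) ≤ Real.log n := fun i h1 h2 =>
    Real.log_le_log (by exact_mod_cast hd1 i h1 h2) (by exact_mod_cast hdn i h1 h2)
  -- Step 1 : log V ≤ S
  have hpos : ∀ j ∈ Finset.Icc 1 τ, ∀ i ∈ Finset.Ico 1 j,
      (0:ℝ) < (dvs n j : ℝ) - (dvs n i : ℝ) := by
    intro j hj i hi
    rw [Finset.mem_Icc] at hj
    rw [Finset.mem_Ico] at hi
    have := dvs_lt n hi.1 hi.2 hj.2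
    have : (dvs n i : ℝ) < dvs n j := by exact_mod_cast this
    linarith
  have step1 : Real.log (Vfun n) ≤ Sfun n := by
    rw [Vfun, Real.log_prod]
    · have : ∀ j ∈ Finset.Icc 1 τ,
          Real.log (∏ i ∈ Finset.Ico 1 j, ((dvs n j : ℝ) - (dvs n i : ℝ)))
            ≤ ((j:ℝ) - 1) * Real.log (dvs n j) := by
        intro j hj
        rw [Real.log_prod (fun i hi => (hpos j hj i hi).ne')]
        have hb : ∀ i ∈ Finset.Ico 1 j,
            Real.log ((dvs n j : ℝ) - (dvs n i : ℝ)) ≤ Real.log (dvs n j) := by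
          intro i hi
          apply Real.log_le_log (hpos j hj i hi)
          have : (0:ℝ) ≤ (dvs n i : ℝ) := by positivity
          linarith
        calc ∑ i ∈ Finset.Ico 1 j, Real.log ((dvs n j : ℝ) - (dvs n i : ℝ))
            ≤ ∑ i ∈ Finset.Ico 1 j, Real.log (dvs n j) := Finset.sum_le_sum hb
          _ = ((j:ℝ) - 1) * Real.log (dvs n j) := by
              rw [Finset.sum_const, Nat.card_Ico, nsmul_eq_mul]
              congr 1
              rw [Finset.mem_Icc] at hj
              push_cast [Nat.cast_sub hj.1]
              ring
      exact (Finset.sum_le_sum this).trans_eq rfl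
    · intro j hj
      exact Finset.prod_ne_zero_iff.mpr (fun i hi => (hpos j hj i hi).ne')
  -- reflection identity
  have hlog_reflect : ∀ i, 1 ≤ i → i ≤ τ →
      Real.log (dvs n (τ + 1 - i)) = Real.log n - Real.log (dvs n i) := by
    intro i h1 h2
    have hm := dvs_reflect n hn0 h1 h2
    have : Real.log ((dvs n i : ℝ) * (dvs n (τ + 1 - i) : ℝ)) = Real.log n := by
      rw [← Nat.cast_mul, hm]
    rw [Real.log_mul (by exact_mod_cast Nat.one_le_iff_ne_zero.mp (hd1 i h1 h2))
      (by exact_mod_cast Nat.one_le_iff_ne_zero.mp (hd1 _ (by omega) (by omega)))] at this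
    linarith
  have hrefl : Sfun n = ∑ i ∈ Finset.Icc 1 τ,
      ((τ:ℝ) - i) * (Real.log n - Real.log (dvs n i)) := by
    rw [Sfun]
    apply Finset.sum_nbij' (i := fun a => τ + 1 - a) (j := fun a => τ + 1 - a)
    · intro a ha; rw [Finset.mem_Icc] at *; omega
    · intro a ha; rw [Finset.mem_Icc] at *; omega
    · intro a ha; rw [Finset.mem_Icc] at ha; omega
    · intro a ha; rw [Finset.mem_Icc] at ha; omega
    · intro a ha
      rw [Finset.mem_Icc] at ha
      rw [hlog_reflect a ha.1 ha.2]
      have hc : ((τ + 1 - a : ℕ) : ℝ) = (τ:ℝ) + 1 - a := by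
        push_cast [Nat.cast_sub (by omega : a ≤ τ + 1)]
        ring
      rw [hc]
      ring_nf
  -- termwise bound
  have hterm : ∀ i ∈ Finset.Icc 1 τ,
      ((i:ℝ) - 1) * Real.log (dvs n i) + ((τ:ℝ) - i) * (Real.log n - Real.log (dvs n i))
        ≤ (((τ - i) + (2*i - 1 - τ) : ℕ) : ℝ) * Real.log n := by
    intro i hi
    rw [Finset.mem_Icc] at hi
    obtain ⟨h1, h2⟩ := hi
    have hx0 := hf0 i h1 h2
    have hxL := hfL i h1 h2
    by_cases hc : τ ≤ 2*i - 1
    · have e : ((τ - i) + (2*i - 1 - τ) : ℕ) = i - 1 := by omega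
      rw [e]
      have ec : ((i - 1 : ℕ):ℝ) = (i:ℝ) - 1 := by push_cast [Nat.cast_sub h1]; ring
      rw [ec]
      have hcoef : (0:ℝ) ≤ 2*(i:ℝ) - 1 - τ := by
        have h3 : τ + 1 ≤ 2*i := by omega
        have h4 : ((τ:ℝ)) + 1 ≤ 2*(i:ℝ) := by exact_mod_cast h3
        linarith
      nlinarith [mul_nonneg hcoef (by linarith : (0:ℝ) ≤ Real.log n - Real.log (dvs n i))]
    · have e : ((τ - i) + (2*i - 1 - τ) : ℕ) = τ - i := by omega
      rw [e]
      have ec : ((τ - i : ℕ):ℝ) = (τ:ℝ) - i := by push_cast [Nat.cast_sub h2]; ring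
      rw [ec]
      have hcoef : 2*(i:ℝ) - 1 - τ ≤ 0 := by
        have h3 : 2*i ≤ τ := by omega
        have h4 : 2*(i:ℝ) ≤ (τ:ℝ) := by exact_mod_cast h3
        linarith
      nlinarith [mul_nonpos_of_nonpos_of_nonneg hcoef hx0]
  have h2S : 2 * Sfun n ≤
      ((∑ i ∈ Finset.Icc 1 τ, ((τ - i) + (2*i - 1 - τ)) : ℕ) : ℝ) * Real.log n := by
    have e1 : 2 * Sfun n = ∑ i ∈ Finset.Icc 1 τ,
        (((i:ℝ) - 1) * Real.log (dvs n i)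
          + ((τ:ℝ) - i) * (Real.log n - Real.log (dvs n i))) := by
      rw [two_mul]
      nth_rewrite 2 [hrefl]
      rw [Sfun, ← Finset.sum_add_distrib]
    rw [e1, Nat.cast_sum, Finset.sum_mul]
    exact Finset.sum_le_sum hterm
  have hb' : ((∑ i ∈ Finset.Icc 1 τ, ((τ - i) + (2*i - 1 - τ)) : ℕ) : ℝ)
      ≤ 3/4 * (τ:ℝ)^2 := by
    have hb := nat_bound τ
    have hb2 : (4:ℝ) * ((∑ i ∈ Finset.Icc 1 τ, ((τ - i) + (2*i - 1 - τ)) : ℕ) : ℝ)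
        ≤ 3 * (τ:ℝ)^2 := by exact_mod_cast hb
    linarith
  have hfinal : Sfun n ≤ 3 / 8 * (τ:ℝ) ^ 2 * Real.log n := by
    have := mul_le_mul_of_nonneg_right hb' hL0
    linarith
  exact step1.trans hfinal
end
end

section
/- For every integer n ≥ 2 and every real δ with 0 < δ ≤ 1/2, the number of positive divisors d of n with |log d − (log n)/2| ≥ δ · log n is at most τ(n) · M(n) / (4δ²), where M(n) := max_{p^α ∥ n} (log p^α)/(log n) is the maximum over the prime powers p^α exactly dividing n. -/
open Finset
open scoped Classical

noncomputable section

/-- Sums over divisors of `p^k * a` decompose when `p ∤ a`. -/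
lemma sum_divisors_primePow_mul {M : Type*} [AddCommMonoid M] {p a : ℕ} (hp : p.Prime)
    (hpa : ¬ p ∣ a) (ha : a ≠ 0) (k : ℕ) (f : ℕ → M) :
    ∑ d ∈ (p ^ k * a).divisors, f d
      = ∑ i ∈ Finset.range (k + 1), ∑ e ∈ a.divisors, f (p ^ i * e) := by
  have hn0 : p ^ k * a ≠ 0 := mul_ne_zero (pow_ne_zero _ hp.pos.ne') ha
  rw [← Finset.sum_product']
  refine Finset.sum_nbij' (i := fun d => (d.factorization p, d / p ^ d.factorization p))
    (j := fun x : ℕ × ℕ => p ^ x.1 * x.2) ?_ ?_ ?_ ?_ ?_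
  · intro d hd
    rw [Nat.mem_divisors] at hd
    have hd0 : d ≠ 0 := ne_of_gt (Nat.pos_of_dvd_of_pos hd.1 (Nat.pos_of_ne_zero hn0))
    simp only [Finset.mem_product, Finset.mem_range, Nat.mem_divisors]
    constructor
    · have h1 : d.factorization ≤ (p ^ k * a).factorization :=
        (Nat.factorization_le_iff_dvd hd0 hn0).2 hd.1
      have h2 : (p ^ k * a).factorization p = k := by
        rw [Nat.factorization_mul (pow_ne_zero _ hp.pos.ne') ha]
        simp [hp.factorization_pow, Nat.factorization_eq_zero_of_not_dvd hpa]
      exact Nat.lt_succ_iff.mpr (h2 ▸ h1 p)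
    · refine ⟨?_, ha⟩
      have hdvd : d / p ^ d.factorization p ∣ p ^ k * a :=
        (Nat.ordCompl_dvd d p).trans hd.1
      have hcop : Nat.Coprime (p ^ k) (d / p ^ d.factorization p) :=
        Nat.Coprime.pow_left _ ((hp.coprime_iff_not_dvd).2 (Nat.not_dvd_ordCompl hp hd0))
      exact hcop.symm.dvd_of_dvd_mul_left hdvd
  · rintro ⟨i, e⟩ hie
    simp only [Finset.mem_product, Finset.mem_range, Nat.mem_divisors] at hie ⊢
    exact ⟨mul_dvd_mul (pow_dvd_pow p (Nat.lt_succ_iff.mp hie.1)) hie.2.1, hn0⟩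
  · intro d hd
    exact Nat.ordProj_mul_ordCompl_eq_self d p
  · rintro ⟨i, e⟩ hie
    simp only [Finset.mem_product, Finset.mem_range, Nat.mem_divisors] at hie
    have he0 : e ≠ 0 := ne_of_gt (Nat.pos_of_dvd_of_pos hie.2.1 (Nat.pos_of_ne_zero ha))
    have hpe : ¬ p ∣ e := fun h => hpa (h.trans hie.2.1)
    have hfact : (p ^ i * e).factorization p = i := by
      rw [Nat.factorization_mul (pow_ne_zero _ hp.pos.ne') he0]
      simp [hp.factorization_pow, Nat.factorization_eq_zero_of_not_dvd hpe]
    have hdiv : p ^ i * e / p ^ (p ^ i * e).factorization p = e := by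
      rw [hfact]
      exact Nat.mul_div_cancel_left _ (pow_pos hp.pos i)
    rw [Prod.ext_iff]
    exact ⟨hfact, hdiv⟩
  · intro d hd
    exact congrArg f (Nat.ordProj_mul_ordCompl_eq_self d p).symm

/-- The variance-type sum over divisors. -/
noncomputable def Ffun (n : ℕ) : ℝ :=
  ∑ d ∈ n.divisors, (Real.log d - Real.log n / 2) ^ 2

/-- The sum of squares of logs of exact prime powers. -/
noncomputable def Wfun (n : ℕ) : ℝ :=
  ∑ p ∈ n.primeFactors, ((n.factorization p : ℝ) * Real.log p) ^ 2

lemma tau_primePow_mul {p a : ℕ} (hp : p.Prime) (hpa : ¬ p ∣ a) (ha : a ≠ 0) (k : ℕ) :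
    tau (p ^ k * a) = (k + 1) * tau a := by
  have h := sum_divisors_primePow_mul (M := ℕ) hp hpa ha k (fun _ => 1)
  rw [tau, tau, Finset.card_eq_sum_ones, Finset.card_eq_sum_ones, h,
    Finset.sum_const, Finset.card_range, smul_eq_mul]

lemma key_variance : ∀ n : ℕ, n ≠ 0 → 4 * Ffun n ≤ (tau n : ℝ) * Wfun n := by
  refine Nat.recOnPrimePow ?_ ?_ ?_
  · intro h; exact absurd rfl h
  · intro _
    have h1 : Ffun 1 = 0 := by
      rw [Ffun, Nat.divisors_one, Finset.sum_singleton]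
      norm_num
    have h2 : Wfun 1 = 0 := by
      rw [Wfun, Nat.primeFactors_one, Finset.sum_empty]
    rw [h1, h2]
    norm_num
  · intro a p k hp hpa hk ih hn0
    have ha : a ≠ 0 := by
      intro h; exact hn0 (by simp [h])
    have hpk : p ^ k ≠ 0 := pow_ne_zero _ hp.pos.ne'
    -- decompose Ffun
    set lp := Real.log p with hlp
    have hlog : ∀ i ∈ Finset.range (k + 1), ∀ e ∈ a.divisors,
        Real.log ((p ^ i * e : ℕ) : ℝ) - Real.log ((p ^ k * a : ℕ) : ℝ) / 2
          = (((i : ℝ) - (k : ℝ) / 2) * lp) + (Real.log e - Real.log a / 2) := by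
      intro i _ e he
      rw [Nat.mem_divisors] at he
      have he0 : (e : ℝ) ≠ 0 := by
        exact_mod_cast ne_of_gt (Nat.pos_of_dvd_of_pos he.1 (Nat.pos_of_ne_zero ha))
      have ha0 : (a : ℝ) ≠ 0 := by exact_mod_cast ha
      have hp0 : (p : ℝ) ≠ 0 := by exact_mod_cast hp.pos.ne'
      push_cast
      rw [Real.log_mul (by positivity) he0, Real.log_mul (by positivity) ha0,
        Real.log_pow, Real.log_pow]
      ring
    have hF : Ffun (p ^ k * a)
        = ∑ i ∈ Finset.range (k + 1), ∑ e ∈ a.divisors,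
            ((((i : ℝ) - (k : ℝ) / 2) * lp) + (Real.log e - Real.log a / 2)) ^ 2 := by
      rw [Ffun, sum_divisors_primePow_mul hp hpa ha k]
      exact Finset.sum_congr rfl fun i hi => Finset.sum_congr rfl fun e he => by
        rw [hlog i hi e he]
    -- expand squares
    have hxsum : ∑ i ∈ Finset.range (k + 1), ((i : ℝ) - (k : ℝ) / 2) = 0 := by
      have h := Finset.sum_range_id_mul_two (k + 1)
      simp only [Nat.add_sub_cancel] at h
      have h2 : ((∑ i ∈ Finset.range (k + 1), i : ℕ) : ℝ) * 2 = (k + 1) * k := by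
        exact_mod_cast congrArg (Nat.cast (R := ℝ)) h
      push_cast at h2
      rw [Finset.sum_sub_distrib, Finset.sum_const, Finset.card_range, nsmul_eq_mul]
      push_cast
      linarith
    have hexp : Ffun (p ^ k * a)
        = (tau a : ℝ) * ∑ i ∈ Finset.range (k + 1), (((i : ℝ) - (k : ℝ) / 2) * lp) ^ 2
          + ((k : ℝ) + 1) * Ffun a := by
      rw [hF]
      have hrow : ∀ i ∈ Finset.range (k + 1),
          ∑ e ∈ a.divisors,
            ((((i : ℝ) - (k : ℝ) / 2) * lp) + (Real.log e - Real.log a / 2)) ^ 2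
          = (tau a : ℝ) * (((i : ℝ) - (k : ℝ) / 2) * lp) ^ 2
            + 2 * (((i : ℝ) - (k : ℝ) / 2) * lp)
                * (∑ e ∈ a.divisors, (Real.log e - Real.log a / 2))
            + Ffun a := by
        intro i _
        simp only [add_sq]
        rw [Finset.sum_add_distrib, Finset.sum_add_distrib, Finset.sum_const,
          ← Finset.mul_sum, nsmul_eq_mul]
        rfl
      rw [Finset.sum_congr rfl hrow, Finset.sum_add_distrib, Finset.sum_add_distrib]
      have e1 : ∑ i ∈ Finset.range (k + 1),
          (tau a : ℝ) * (((i : ℝ) - (k : ℝ) / 2) * lp) ^ 2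
          = (tau a : ℝ) * ∑ i ∈ Finset.range (k + 1),
              (((i : ℝ) - (k : ℝ) / 2) * lp) ^ 2 := by
        rw [Finset.mul_sum]
      have e2 : ∑ i ∈ Finset.range (k + 1),
          2 * (((i : ℝ) - (k : ℝ) / 2) * lp)
            * (∑ e ∈ a.divisors, (Real.log e - Real.log a / 2)) = 0 := by
        have h1 : ∑ i ∈ Finset.range (k + 1),
            2 * (((i : ℝ) - (k : ℝ) / 2) * lp)
              * (∑ e ∈ a.divisors, (Real.log e - Real.log a / 2))
            = (∑ i ∈ Finset.range (k + 1), ((i : ℝ) - (k : ℝ) / 2))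
              * (2 * lp * (∑ e ∈ a.divisors, (Real.log e - Real.log a / 2))) := by
          rw [Finset.sum_mul]
          exact Finset.sum_congr rfl fun i _ => by ring
        rw [h1, hxsum, zero_mul]
      have e3 : ∑ _i ∈ Finset.range (k + 1), Ffun a = ((k : ℝ) + 1) * Ffun a := by
        rw [Finset.sum_const, Finset.card_range, nsmul_eq_mul]
        push_cast
        ring
      rw [e1, e2, e3]
      ring
    -- bound the x-part
    have hxbound : ∑ i ∈ Finset.range (k + 1), (((i : ℝ) - (k : ℝ) / 2) * lp) ^ 2
        ≤ ((k : ℝ) + 1) * (((k : ℝ) / 2) * lp) ^ 2 := by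
      have : ∀ i ∈ Finset.range (k + 1),
          (((i : ℝ) - (k : ℝ) / 2) * lp) ^ 2 ≤ (((k : ℝ) / 2) * lp) ^ 2 := by
        intro i hi
        rw [Finset.mem_range, Nat.lt_succ_iff] at hi
        have hik : (i : ℝ) ≤ k := by exact_mod_cast hi
        have hi0 : (0 : ℝ) ≤ i := by positivity
        have habs : |((i : ℝ) - (k : ℝ) / 2) * lp| ≤ |((k : ℝ) / 2) * lp| := by
          rw [abs_mul, abs_mul]
          apply mul_le_mul_of_nonneg_right _ (abs_nonneg _)
          rw [abs_le]
          constructor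
          · rw [abs_of_nonneg (by positivity : (0:ℝ) ≤ (k:ℝ)/2)]; linarith
          · rw [abs_of_nonneg (by positivity : (0:ℝ) ≤ (k:ℝ)/2)]; linarith
        calc (((i : ℝ) - (k : ℝ) / 2) * lp) ^ 2
            = |((i : ℝ) - (k : ℝ) / 2) * lp| ^ 2 := (sq_abs _).symm
          _ ≤ |((k : ℝ) / 2) * lp| ^ 2 := by
              exact pow_le_pow_left₀ (abs_nonneg _) habs 2
          _ = (((k : ℝ) / 2) * lp) ^ 2 := sq_abs _
      calc ∑ i ∈ Finset.range (k + 1), (((i : ℝ) - (k : ℝ) / 2) * lp) ^ 2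
          ≤ ∑ _i ∈ Finset.range (k + 1), (((k : ℝ) / 2) * lp) ^ 2 :=
            Finset.sum_le_sum this
        _ = ((k : ℝ) + 1) * (((k : ℝ) / 2) * lp) ^ 2 := by
            rw [Finset.sum_const, Finset.card_range, nsmul_eq_mul]; push_cast; ring
    -- Wfun decomposition
    have hpnotmem : p ∉ a.primeFactors := fun h => hpa (Nat.dvd_of_mem_primeFactors h)
    have hfactp : (p ^ k * a).factorization p = k := by
      rw [Nat.factorization_mul hpk ha]
      simp [hp.factorization_pow, Nat.factorization_eq_zero_of_not_dvd hpa]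
    have hprimes : (p ^ k * a).primeFactors = insert p a.primeFactors := by
      rw [Nat.primeFactors_mul hpk ha, Nat.primeFactors_prime_pow hk.ne' hp]
      rw [Finset.insert_eq]
    have hW : Wfun (p ^ k * a) = ((k : ℝ) * lp) ^ 2 + Wfun a := by
      rw [Wfun, hprimes, Finset.sum_insert hpnotmem, hfactp]
      congr 1
      apply Finset.sum_congr rfl
      intro q hq
      have hqp : q ≠ p := fun h => hpnotmem (h ▸ hq)
      have : (p ^ k * a).factorization q = a.factorization q := by
        rw [Nat.factorization_mul hpk ha]
        simp [hp.factorization_pow, Finsupp.single_apply, hqp.symm]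
      rw [this]
    -- combine
    have hIH := ih ha
    have htau : (tau (p ^ k * a) : ℝ) = ((k : ℝ) + 1) * (tau a : ℝ) := by
      rw [tau_primePow_mul hp hpa ha k]; push_cast; ring
    have htau0 : (0 : ℝ) ≤ (tau a : ℝ) := Nat.cast_nonneg _
    have hk0 : (0 : ℝ) ≤ (k : ℝ) + 1 := by positivity
    rw [hexp, htau, hW]
    nlinarith [hxbound, hIH, htau0, hk0, sq_nonneg ((k : ℝ) * lp),
      mul_nonneg htau0 (sq_nonneg ((k : ℝ) * lp))]

lemma log_eq_sum_primeFactors {n : ℕ} (hn : n ≠ 0) :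
    Real.log n = ∑ p ∈ n.primeFactors, (n.factorization p : ℝ) * Real.log p := by
  conv_lhs => rw [← Nat.factorization_prod_pow_eq_self hn]
  rw [Finsupp.prod, Nat.support_factorization]
  push_cast
  rw [Real.log_prod]
  · apply Finset.sum_congr rfl
    intro p hp
    rw [Real.log_pow]
  · intro p hp
    have : 2 ≤ p := (Nat.prime_of_mem_primeFactors hp).two_le
    positivity

theorem count_far_divisors_max (n : ℕ) (hn : 2 ≤ n) (δ : ℝ) (hδ0 : 0 < δ) (hδ : δ ≤ 1 / 2) :
    ((n.divisors.filter (fun d => δ * Real.log n ≤ |Real.log d - Real.log n / 2|)).card : ℝ)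
      ≤ (tau n : ℝ)
          * (n.primeFactors.sup' (Nat.nonempty_primeFactors.mpr hn)
              (fun p => Real.log (p ^ n.factorization p) / Real.log n))
          / (4 * δ ^ 2) := by
  have hn0 : n ≠ 0 := by omega
  set L := Real.log n with hLdef
  have hL : 0 < L := Real.log_pos (by exact_mod_cast hn)
  set M := n.primeFactors.sup' (Nat.nonempty_primeFactors.mpr hn)
      (fun p => Real.log (p ^ n.factorization p) / Real.log n) with hMdef
  -- each exact prime power log is ≤ M * L
  have hML : ∀ p ∈ n.primeFactors, (n.factorization p : ℝ) * Real.log p ≤ M * L := by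
    intro p hp
    have h1 : Real.log ((p : ℝ) ^ n.factorization p) / Real.log n ≤ M :=
      Finset.le_sup' (fun q : ℕ => Real.log ((q : ℝ) ^ n.factorization q) / Real.log (n : ℝ)) hp
    have h2 : Real.log ((p : ℝ) ^ n.factorization p) ≤ M * L := by
      rwa [div_le_iff₀ hL] at h1
    calc (n.factorization p : ℝ) * Real.log p
        = Real.log ((p : ℝ) ^ n.factorization p) := (Real.log_pow _ _).symm
      _ ≤ M * L := h2
  -- W ≤ M * L * L
  have hWle : Wfun n ≤ M * L * L := by
    have hsum : ∑ p ∈ n.primeFactors, (n.factorization p : ℝ) * Real.log p = L :=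
      (log_eq_sum_primeFactors hn0).symm
    calc Wfun n = ∑ p ∈ n.primeFactors, ((n.factorization p : ℝ) * Real.log p) ^ 2 := rfl
      _ ≤ ∑ p ∈ n.primeFactors, (M * L) * ((n.factorization p : ℝ) * Real.log p) := by
          apply Finset.sum_le_sum
          intro p hp
          have ht0 : 0 ≤ (n.factorization p : ℝ) * Real.log p := by
            have : 1 ≤ p := (Nat.prime_of_mem_primeFactors hp).one_lt.le
            have : (1 : ℝ) ≤ p := by exact_mod_cast this
            have := Real.log_nonneg this
            positivity
          rw [sq]
          exact mul_le_mul_of_nonneg_right (hML p hp) ht0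
      _ = (M * L) * L := by rw [← Finset.mul_sum, hsum]
  -- Chebyshev
  have hDeq : (do
      let a ← n.divisors
      pure ((a : ℝ))) = n.divisors.image (fun a : ℕ => (a : ℝ)) :=
    Finset.sup_singleton_apply _ _
  rw [hDeq]
  set T := (n.divisors.image (fun a : ℕ => (a : ℝ))).filter
      (fun d : ℝ => δ * L ≤ |Real.log d - L / 2|) with hTdef
  have hinj : ∀ x ∈ n.divisors, ∀ y ∈ n.divisors,
      (fun a : ℕ => (a : ℝ)) x = (fun a : ℕ => (a : ℝ)) y → x = y := by
    intro x _ y _ h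
    simp only at h
    exact_mod_cast h
  have hcheb : (T.card : ℝ) * (δ * L) ^ 2 ≤ Ffun n := by
    have h1 : ∀ d ∈ T, (δ * L) ^ 2 ≤ (Real.log d - L / 2) ^ 2 := by
      intro d hd
      rw [hTdef, Finset.mem_filter] at hd
      calc (δ * L) ^ 2 ≤ |Real.log d - L / 2| ^ 2 :=
            pow_le_pow_left₀ (by positivity) hd.2 2
        _ = (Real.log d - L / 2) ^ 2 := sq_abs _
    have h2 := Finset.card_nsmul_le_sum T (fun d => (Real.log d - L / 2) ^ 2)
      ((δ * L) ^ 2) h1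
    rw [nsmul_eq_mul] at h2
    refine h2.trans ?_
    have h3 : ∑ d ∈ T, (Real.log d - L / 2) ^ 2
        ≤ ∑ d ∈ n.divisors.image (fun a : ℕ => (a : ℝ)), (Real.log d - L / 2) ^ 2 := by
      apply Finset.sum_le_sum_of_subset_of_nonneg (Finset.filter_subset _ _)
      intro d _ _
      positivity
    refine h3.trans ?_
    rw [Finset.sum_image hinj]
    exact le_of_eq rfl
  have hkey := key_variance n hn0
  -- combine everything
  have hδ2 : (0 : ℝ) < 4 * δ ^ 2 := by positivity
  rw [le_div_iff₀ hδ2]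
  have hL2 : (0 : ℝ) < L ^ 2 := by positivity
  rw [← mul_le_mul_iff_of_pos_right hL2]
  have htau0 : (0 : ℝ) ≤ (tau n : ℝ) := Nat.cast_nonneg _
  calc (T.card : ℝ) * (4 * δ ^ 2) * L ^ 2
      = 4 * ((T.card : ℝ) * (δ * L) ^ 2) := by ring
    _ ≤ 4 * Ffun n := by linarith
    _ ≤ (tau n : ℝ) * Wfun n := hkey
    _ ≤ (tau n : ℝ) * (M * L * L) := mul_le_mul_of_nonneg_left hWle htau0
    _ = (tau n : ℝ) * M * L ^ 2 := by ring
end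
end

section
/- For every integer n ≥ 2 and every real δ with 0 < δ ≤ 1/2, the number of positive divisors d of n with |log d − (log n)/2| ≥ δ · log n is at most (1/(δ · log n)²) · τ(n) · ∑_{p^α ∥ n} (log p^α)² · (α + 2)/(12α), where the sum is over the prime powers p^α exactly dividing n. -/
open Finset
open scoped Classical

lemma sum_range_cast' (m : ℕ) : ∑ i ∈ range m, (i:ℝ) = m*(m-1)/2 := by
  induction m with
  | zero => simp
  | succ k ih => rw [Finset.sum_range_succ, ih]; push_cast; ring

lemma sum_range_sq_cast' (m : ℕ) : ∑ i ∈ range m, (i:ℝ)^2 = m*(m-1)*(2*m-1)/6 := by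
  induction m with
  | zero => simp
  | succ k ih => rw [Finset.sum_range_succ, ih]; push_cast; ring

lemma sum_centered_sq (k : ℕ) :
    ∑ i ∈ range (k+1), ((i:ℝ) - k/2)^2 = ((k:ℝ)+1)*k*((k:ℝ)+2)/12 := by
  have h : ∀ i ∈ range (k+1), ((i:ℝ) - k/2)^2 = (i:ℝ)^2 - (i:ℝ)*k + (k:ℝ)^2/4 := by
    intro i _; ring
  rw [Finset.sum_congr rfl h, Finset.sum_add_distrib, Finset.sum_sub_distrib,
    ← Finset.sum_mul, sum_range_sq_cast', sum_range_cast', Finset.sum_const,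
    Finset.card_range, nsmul_eq_mul]
  push_cast; ring

lemma sum_log_centered (n : ℕ) (hn : n ≠ 0) :
    ∑ d ∈ n.divisors, (Real.log d - Real.log n / 2) = 0 := by
  have key : ∀ d ∈ n.divisors, Real.log d + Real.log ((n / d : ℕ)) = Real.log n := by
    intro d hd
    obtain ⟨hd1, hn0⟩ := Nat.mem_divisors.mp hd
    have hd0 : d ≠ 0 := by rintro rfl; exact hn0 (Nat.eq_zero_of_zero_dvd hd1)
    have hnd0 : n / d ≠ 0 :=
      (Nat.div_pos (Nat.le_of_dvd (Nat.pos_of_ne_zero hn0) hd1) (Nat.pos_of_ne_zero hd0)).ne'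
    rw [← Real.log_mul (by exact_mod_cast hd0) (by exact_mod_cast hnd0), ← Nat.cast_mul,
      Nat.mul_div_cancel' hd1]
  have h2 : (2:ℝ) * ∑ d ∈ n.divisors, Real.log d = (n.divisors.card : ℝ) * Real.log n := by
    have hdiv := Nat.sum_div_divisors n (fun d => Real.log d)
    calc (2:ℝ) * ∑ d ∈ n.divisors, Real.log d
        = (∑ d ∈ n.divisors, Real.log d) + ∑ d ∈ n.divisors, Real.log ((n / d : ℕ)) := by
          rw [hdiv]; ring
      _ = ∑ d ∈ n.divisors, (Real.log d + Real.log ((n / d : ℕ))) := by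
          rw [Finset.sum_add_distrib]
      _ = ∑ d ∈ n.divisors, Real.log n := Finset.sum_congr rfl key
      _ = (n.divisors.card : ℝ) * Real.log n := by rw [Finset.sum_const, nsmul_eq_mul]
  rw [Finset.sum_sub_distrib, Finset.sum_const, nsmul_eq_mul]
  linarith

lemma sum_divisors_mul_coprime (f : ℕ → ℝ) {m n : ℕ} (hm : m ≠ 0) (hn : n ≠ 0)
    (h : m.Coprime n) :
    ∑ d ∈ (m*n).divisors, f d = ∑ a ∈ m.divisors, ∑ b ∈ n.divisors, f (a*b) := by
  rw [← Finset.sum_product']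
  refine (Finset.sum_bij' (fun p _ => p.1 * p.2) (fun d _ => (d.gcd m, d.gcd n)) ?_ ?_ ?_ ?_ ?_).symm
  · rintro ⟨a, b⟩ hp
    rw [Finset.mem_product] at hp
    exact Nat.mem_divisors.mpr ⟨mul_dvd_mul (Nat.mem_divisors.mp hp.1).1
      (Nat.mem_divisors.mp hp.2).1, mul_ne_zero hm hn⟩
  · intro d hd
    rw [Finset.mem_product]
    exact ⟨Nat.mem_divisors.mpr ⟨Nat.gcd_dvd_right d m, hm⟩,
      Nat.mem_divisors.mpr ⟨Nat.gcd_dvd_right d n, hn⟩⟩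
  · rintro ⟨a, b⟩ hp
    rw [Finset.mem_product] at hp
    obtain ⟨ha, _⟩ := Nat.mem_divisors.mp hp.1
    obtain ⟨hb, _⟩ := Nat.mem_divisors.mp hp.2
    have hbm : Nat.Coprime b m := (Nat.Coprime.symm h).coprime_dvd_left hb
    have han : Nat.Coprime a n := h.coprime_dvd_left ha
    have e1 : (a*b).gcd m = a := by
      rw [mul_comm, Nat.Coprime.gcd_mul_left_cancel a hbm, Nat.gcd_eq_left ha]
    have e2 : (a*b).gcd n = b := by
      rw [Nat.Coprime.gcd_mul_left_cancel b han, Nat.gcd_eq_left hb]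
    simp [e1, e2]
  · intro d hd
    obtain ⟨hdvd, _⟩ := Nat.mem_divisors.mp hd
    have := (Nat.Coprime.gcd_mul d h).symm
    rw [Nat.gcd_eq_left hdvd] at this
    simpa using this
  · intros; rfl

lemma variance_divisors : ∀ n : ℕ, n ≠ 0 →
    ∑ d ∈ n.divisors, (Real.log d - Real.log n / 2)^2
      = (n.divisors.card : ℝ) * ∑ p ∈ n.primeFactors,
          (Real.log p)^2 * ((n.factorization p : ℝ) * ((n.factorization p : ℝ) + 2)) / 12 := by
  refine Nat.recOnPrimeCoprime ?_ ?_ ?_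
  · intro h; exact absurd rfl h
  · intro p k hp _
    have hpp : p.Prime := hp
    rcases Nat.eq_zero_or_pos k with rfl | hk
    · simp
    · have hlhs : ∑ d ∈ (p^k).divisors, (Real.log d - Real.log ((p^k : ℕ)) / 2)^2
          = (Real.log p)^2 * (((k:ℝ)+1)*k*((k:ℝ)+2)/12) := by
        rw [Nat.sum_divisors_prime_pow hpp, ← sum_centered_sq k, Finset.mul_sum]
        refine Finset.sum_congr rfl fun i _ => ?_
        push_cast
        rw [Real.log_pow, Real.log_pow]
        ring
      rw [hlhs, Nat.primeFactors_prime_pow hk.ne' hp, Finset.sum_singleton,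
        hpp.factorization_pow, Finsupp.single_eq_same]
      have hcard : (p^k).divisors.card = k+1 := by
        rw [Nat.divisors_prime_pow hpp]; simp
      rw [hcard]
      push_cast; ring
  · intro a b ha hb hab iha ihb
    have ha0 : a ≠ 0 := by omega
    have hb0 : b ≠ 0 := by omega
    intro _
    have haR : ((a:ℝ)) ≠ 0 := by exact_mod_cast ha0
    have hbR : ((b:ℝ)) ≠ 0 := by exact_mod_cast hb0
    have hlogab : Real.log ((a*b : ℕ)) = Real.log a + Real.log b := by
      push_cast; exact Real.log_mul haR hbR
    have hA := sum_log_centered a ha0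
    have hB := sum_log_centered b hb0
    have expand : ∑ d ∈ (a*b).divisors, (Real.log d - Real.log ((a*b:ℕ)) / 2)^2
        = (b.divisors.card : ℝ) * (∑ d ∈ a.divisors, (Real.log d - Real.log a / 2)^2)
          + (a.divisors.card : ℝ) * (∑ d ∈ b.divisors, (Real.log d - Real.log b / 2)^2) := by
      rw [sum_divisors_mul_coprime _ ha0 hb0 hab]
      have step : ∀ x ∈ a.divisors, ∑ y ∈ b.divisors,
            (Real.log ((x*y : ℕ)) - Real.log ((a*b:ℕ)) / 2)^2
          = (b.divisors.card : ℝ) * (Real.log x - Real.log a / 2)^2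
            + 2 * (Real.log x - Real.log a / 2) * (∑ y ∈ b.divisors, (Real.log y - Real.log b / 2))
            + ∑ y ∈ b.divisors, (Real.log y - Real.log b / 2)^2 := by
        intro x hx
        have hx0 : x ≠ 0 := by
          rintro rfl; exact ha0 (Nat.eq_zero_of_zero_dvd (Nat.mem_divisors.mp hx).1)
        have hterm : ∀ y ∈ b.divisors, (Real.log ((x*y : ℕ)) - Real.log ((a*b:ℕ)) / 2)^2
            = (Real.log x - Real.log a / 2)^2
              + 2 * (Real.log x - Real.log a / 2) * (Real.log y - Real.log b / 2)
              + (Real.log y - Real.log b / 2)^2 := by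
          intro y hy
          have hy0 : y ≠ 0 := by
            rintro rfl; exact hb0 (Nat.eq_zero_of_zero_dvd (Nat.mem_divisors.mp hy).1)
          have hlxy : Real.log ((x*y : ℕ)) = Real.log x + Real.log y := by
            push_cast
            exact Real.log_mul (by exact_mod_cast hx0) (by exact_mod_cast hy0)
          rw [hlxy, hlogab]; ring
        rw [Finset.sum_congr rfl hterm, Finset.sum_add_distrib, Finset.sum_add_distrib,
          Finset.sum_const, nsmul_eq_mul, ← Finset.mul_sum]
      rw [Finset.sum_congr rfl step, Finset.sum_add_distrib, Finset.sum_add_distrib, hB,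
        Finset.sum_const, nsmul_eq_mul, ← Finset.sum_mul, ← Finset.mul_sum]
      simp
    rw [expand, iha ha0, ihb hb0, hab.card_divisors_mul, hab.primeFactors_mul,
      Finset.sum_union hab.disjoint_primeFactors]
    have hfa : ∀ p ∈ a.primeFactors, (a*b).factorization p = a.factorization p := by
      intro p hp
      have hnb : p ∉ b.primeFactors :=
        Finset.disjoint_left.mp hab.disjoint_primeFactors hp
      have : b.factorization p = 0 := by
        rw [← Nat.support_factorization] at hnb
        exact Finsupp.notMem_support_iff.mp hnb
      rw [Nat.factorization_mul ha0 hb0, Finsupp.add_apply, this, add_zero]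
    have hfb : ∀ p ∈ b.primeFactors, (a*b).factorization p = b.factorization p := by
      intro p hp
      have hna : p ∉ a.primeFactors :=
        Finset.disjoint_right.mp hab.disjoint_primeFactors hp
      have : a.factorization p = 0 := by
        rw [← Nat.support_factorization] at hna
        exact Finsupp.notMem_support_iff.mp hna
      rw [Nat.factorization_mul ha0 hb0, Finsupp.add_apply, this, zero_add]
    have e1 : ∑ p ∈ a.primeFactors,
        (Real.log p)^2 * (((a*b).factorization p : ℝ) * (((a*b).factorization p : ℝ) + 2)) / 12
        = ∑ p ∈ a.primeFactors,
        (Real.log p)^2 * ((a.factorization p : ℝ) * ((a.factorization p : ℝ) + 2)) / 12 :=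
      Finset.sum_congr rfl (fun p hp => by rw [hfa p hp])
    have e2 : ∑ p ∈ b.primeFactors,
        (Real.log p)^2 * (((a*b).factorization p : ℝ) * (((a*b).factorization p : ℝ) + 2)) / 12
        = ∑ p ∈ b.primeFactors,
        (Real.log p)^2 * ((b.factorization p : ℝ) * ((b.factorization p : ℝ) + 2)) / 12 :=
      Finset.sum_congr rfl (fun p hp => by rw [hfb p hp])
    rw [e1, e2]
    push_cast
    ring

noncomputable section

theorem count_far_divisors (n : ℕ) (hn : 2 ≤ n) (δ : ℝ) (hδ0 : 0 < δ) (hδ : δ ≤ 1 / 2) :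
    ((n.divisors.filter (fun d => δ * Real.log n ≤ |Real.log d - Real.log n / 2|)).card : ℝ)
      ≤ 1 / (δ * Real.log n) ^ 2 * (tau n : ℝ)
          * ∑ p ∈ n.primeFactors,
              (Real.log (p ^ n.factorization p)) ^ 2
                * ((n.factorization p : ℝ) + 2) / (12 * (n.factorization p : ℝ)) := by
  have hn0 : n ≠ 0 := by omega
  have hn1 : (1:ℝ) < (n:ℝ) := by exact_mod_cast hn
  have hlog : 0 < Real.log n := Real.log_pos hn1
  have hc : 0 < (δ * Real.log n)^2 := by positivity
  set F := n.divisors.filter (fun d : ℕ => δ * Real.log n ≤ |Real.log d - Real.log n / 2|) with hF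
  have h1 : (F.card : ℝ) * (δ * Real.log n)^2 ≤ ∑ d ∈ F, (Real.log d - Real.log n/2)^2 := by
    rw [← nsmul_eq_mul]
    refine Finset.card_nsmul_le_sum F _ _ ?_
    intro d hd
    have hd' := (Finset.mem_filter.mp hd).2
    calc (δ * Real.log n)^2 ≤ |Real.log d - Real.log n / 2|^2 := by
          apply pow_le_pow_left₀ (by positivity) hd'
      _ = (Real.log d - Real.log n / 2)^2 := sq_abs _
  have h2 : ∑ d ∈ F, (Real.log d - Real.log n/2)^2
      ≤ ∑ d ∈ n.divisors, (Real.log d - Real.log n/2)^2 :=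
    by
      apply Finset.sum_le_sum_of_subset_of_nonneg
      · rw [hF]; exact Finset.filter_subset _ _
      · intros; exact sq_nonneg _
  have h3 := variance_divisors n hn0
  have h4 : ∑ p ∈ n.primeFactors,
        (Real.log p)^2 * ((n.factorization p : ℝ) * ((n.factorization p : ℝ) + 2)) / 12
      = ∑ p ∈ n.primeFactors,
        (Real.log (p ^ n.factorization p)) ^ 2
          * ((n.factorization p : ℝ) + 2) / (12 * (n.factorization p : ℝ)) := by
    refine Finset.sum_congr rfl fun p hp => ?_
    have hα : n.factorization p ≠ 0 := by
      rw [← Nat.support_factorization] at hp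
      exact Finsupp.mem_support_iff.mp hp
    have hαR : ((n.factorization p : ℝ)) ≠ 0 := by exact_mod_cast hα
    push_cast
    rw [Real.log_pow]
    field_simp
  set SS := ∑ p ∈ n.primeFactors,
        (Real.log (p ^ n.factorization p)) ^ 2
          * ((n.factorization p : ℝ) + 2) / (12 * (n.factorization p : ℝ)) with hSS
  have hmain : (F.card : ℝ) * (δ * Real.log n)^2 ≤ (tau n : ℝ) * SS := by
    calc (F.card : ℝ) * (δ * Real.log n)^2 ≤ ∑ d ∈ F, (Real.log d - Real.log n/2)^2 := h1
      _ ≤ ∑ d ∈ n.divisors, (Real.log d - Real.log n/2)^2 := h2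
      _ = (n.divisors.card : ℝ) * ∑ p ∈ n.primeFactors,
            (Real.log p)^2 * ((n.factorization p : ℝ) * ((n.factorization p : ℝ) + 2)) / 12 := h3
      _ = (tau n : ℝ) * SS := by rw [h4]; rfl
  have himg : (do let a ← n.divisors; pure ↑a : Finset ℝ)
      = n.divisors.image (fun d : ℕ => (d:ℝ)) := by
    simp [Finset.image]
  have hrw : 1 / (δ * Real.log n) ^ 2 * (tau n : ℝ) * SS
      = ((tau n : ℝ) * SS) / (δ * Real.log n) ^ 2 := by ring
  rw [himg, Finset.filter_image, Finset.card_image_of_injective _ Nat.cast_injective,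
    hrw, le_div_iff₀ hc]
  exact hmain
end
end
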